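/- Let f_1,…,f_n : ℝ^d → ℝ be differentiable with L-Lipschitz gradients and f = (1/n)∑_{i=1}^n f_i. Fix points x^{(1)},…,x^{(n)} ∈ ℝ^d with mean x̄ = (1/n)∑_i x^{(i)}, and assume (1/n)∑_{i=1}^n ‖∇f_i(x̄) − ∇f(x̄)‖² ≤ ζ². Let g^{(1)},…,g^{(n)} be independent random vectors in ℝ^d with E[g^{(i)}] = ∇f_i(x^{(i)}) and E‖g^{(i)} − ∇f_i(x^{(i)})‖² ≤ σ², and set ḡ = (1/n)∑_{i=1}^n g^{(i)}. Then ∑_{i=1}^n E‖ g^{(i)} − ḡ ‖² ≤ nσ² + 6L²·∑_{i=1}^n ‖x^{(i)} − x̄‖² + 3nζ². -/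

import Mathlib

open MeasureTheory ProbabilityTheory Real

local notation "⟪" x ", " y "⟫" => @inner ℝ _ _ x y

-- pointwise variance-minimizing property of the mean
lemma sum_sq_sub_mean_le {E : Type*} [NormedAddCommGroup E] [InnerProductSpace ℝ E]
    {n : ℕ} (hn : 1 ≤ n) (a : Fin n → E) (c : E) :
    ∑ i, ‖a i - (1 / (n : ℝ)) • ∑ k, a k‖ ^ 2 ≤ ∑ i, ‖a i - c‖ ^ 2 := by
  have hn0 : (n : ℝ) ≠ 0 := by positivity
  set ab : E := (1 / (n : ℝ)) • ∑ k, a k with hab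
  have hsum : ∑ k, a k = (n : ℝ) • ab := by
    rw [hab, smul_smul, mul_one_div, div_self hn0, one_smul]
  have key : ∀ i, ‖a i - ab‖ ^ 2
      = ‖a i - c‖ ^ 2 - 2 * ⟪a i - c, ab - c⟫ + ‖ab - c‖ ^ 2 := by
    intro i
    have h : a i - ab = (a i - c) - (ab - c) := by abel
    rw [h, norm_sub_sq_real]
  calc ∑ i, ‖a i - ab‖ ^ 2
      = ∑ i, (‖a i - c‖ ^ 2 - 2 * ⟪a i - c, ab - c⟫ + ‖ab - c‖ ^ 2) := by
        exact Finset.sum_congr rfl fun i _ => key i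
    _ = ∑ i, ‖a i - c‖ ^ 2 - 2 * ⟪∑ i, (a i - c), ab - c⟫
          + (n : ℝ) * ‖ab - c‖ ^ 2 := by
        rw [Finset.sum_add_distrib, Finset.sum_sub_distrib, sum_inner,
          Finset.sum_const, Finset.card_univ, Fintype.card_fin, nsmul_eq_mul,
          ← Finset.mul_sum]
    _ = ∑ i, ‖a i - c‖ ^ 2 - (n : ℝ) * ‖ab - c‖ ^ 2 := by
        have h1 : ∑ i, (a i - c) = (n : ℝ) • (ab - c) := by
          rw [Finset.sum_sub_distrib, hsum, Finset.sum_const, Finset.card_univ,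
            Fintype.card_fin, smul_sub]
          simp [Nat.cast_smul_eq_nsmul]
        rw [h1, real_inner_smul_left, real_inner_self_eq_norm_sq]
        ring
    _ ≤ ∑ i, ‖a i - c‖ ^ 2 := by
        have : 0 ≤ (n : ℝ) * ‖ab - c‖ ^ 2 := by positivity
        linarith

lemma norm_add_sq_le_two {E : Type*} [NormedAddCommGroup E]
    (u v : E) : ‖u + v‖ ^ 2 ≤ 2 * ‖u‖ ^ 2 + 2 * ‖v‖ ^ 2 := by
  have h := norm_add_le u v
  have hu := norm_nonneg u
  have hv := norm_nonneg v
  have h0 := norm_nonneg (u + v)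
  nlinarith [sq_nonneg (‖u‖ - ‖v‖)]

/-- Let `f 1, …, f n : ℝ^d → ℝ` be differentiable with `L`-Lipschitz
gradients, `F = (1/n)∑ i, f i`.  Fix points `x i` with mean `x̄`, assume
`(1/n)∑ i ‖∇f_i(x̄) − ∇F(x̄)‖² ≤ ζ²`.  Let `g i` be independent random vectors with
`E[g i] = ∇f_i(x i)` and `E‖g i − ∇f_i(x i)‖² ≤ σ²`, and `ḡ = (1/n)∑ i, g i`.
Then `∑ i E‖g i − ḡ‖² ≤ nσ² + 6L²·∑ i ‖x i − x̄‖² + 3nζ²`. -/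
theorem statement9 {Ω : Type*} [MeasurableSpace Ω] {μ : Measure Ω} [IsProbabilityMeasure μ]
    {n d : ℕ} (hn : 1 ≤ n) (L σ ζ : ℝ)
    (hL : 0 ≤ L) (hσ : 0 ≤ σ) (hζ : 0 ≤ ζ)
    (f : Fin n → EuclideanSpace ℝ (Fin d) → ℝ)
    (hdiff : ∀ i, Differentiable ℝ (f i))
    (hlip : ∀ i x y, ‖gradient (f i) x - gradient (f i) y‖ ≤ L * ‖x - y‖)
    (F : EuclideanSpace ℝ (Fin d) → ℝ)
    (hF : F = fun x => (1 / (n : ℝ)) * ∑ i, f i x)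
    (x : Fin n → EuclideanSpace ℝ (Fin d))
    (xbar : EuclideanSpace ℝ (Fin d))
    (hxbar : xbar = (1 / (n : ℝ)) • ∑ i, x i)
    (hζbound : (1 / (n : ℝ)) * ∑ i, ‖gradient (f i) xbar - gradient F xbar‖ ^ 2 ≤ ζ ^ 2)
    (g : Fin n → Ω → EuclideanSpace ℝ (Fin d))
    (hmeas : ∀ i, Measurable (g i))
    (hL2 : ∀ i, MemLp (g i) 2 μ)
    (hindep : iIndepFun g μ)
    (hmean : ∀ i, (∫ ω, g i ω ∂μ) = gradient (f i) (x i))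
    (hvar : ∀ i, (∫ ω, ‖g i ω - gradient (f i) (x i)‖ ^ 2 ∂μ) ≤ σ ^ 2) :
    ∑ i, (∫ ω, ‖g i ω - (1 / (n : ℝ)) • ∑ k, g k ω‖ ^ 2 ∂μ) ≤
      n * σ ^ 2 + 6 * L ^ 2 * ∑ i, ‖x i - xbar‖ ^ 2 + 3 * n * ζ ^ 2 := by
  have hn0 : (n : ℝ) ≠ 0 := by positivity
  set c : EuclideanSpace ℝ (Fin d) := gradient F xbar with hc
  set m : Fin n → EuclideanSpace ℝ (Fin d) := fun i => gradient (f i) (x i) with hm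
  -- Memℒp of g i - ḡ
  have hgbarL2 : MemLp (fun ω => (1 / (n : ℝ)) • ∑ k, g k ω) 2 μ := by
    have : MemLp (fun ω => ∑ k, g k ω) 2 μ :=
      memLp_finset_sum _ (fun k _ => hL2 k)
    exact this.const_smul (1 / (n : ℝ))
  have hInt1 : ∀ i : Fin n,
      Integrable (fun ω => ‖g i ω - (1 / (n : ℝ)) • ∑ k, g k ω‖ ^ 2) μ := by
    intro i
    exact ((hL2 i).sub hgbarL2).norm.integrable_sq
  have hInt2 : ∀ i : Fin n, Integrable (fun ω => ‖g i ω - c‖ ^ 2) μ := by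
    intro i
    exact ((hL2 i).sub (memLp_const c)).norm.integrable_sq
  -- per-coordinate bias-variance decomposition
  have hkey : ∀ i : Fin n,
      (∫ ω, ‖g i ω - c‖ ^ 2 ∂μ)
        = (∫ ω, ‖g i ω - m i‖ ^ 2 ∂μ) + ‖m i - c‖ ^ 2 := by
    intro i
    have hgint : Integrable (g i) μ := (hL2 i).integrable one_le_two
    have hgm : Integrable (fun ω => g i ω - m i) μ := hgint.sub (integrable_const _)
    have hIa : Integrable (fun ω => ‖g i ω - m i‖ ^ 2) μ :=
      ((hL2 i).sub (memLp_const (m i))).norm.integrable_sq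
    have hIb : Integrable (fun ω => 2 * ⟪m i - c, g i ω - m i⟫) μ :=
      (hgm.const_inner _).const_mul 2
    have hexp : ∀ ω, ‖g i ω - c‖ ^ 2
        = ‖g i ω - m i‖ ^ 2 + 2 * ⟪m i - c, g i ω - m i⟫ + ‖m i - c‖ ^ 2 := by
      intro ω
      have h : g i ω - c = (g i ω - m i) + (m i - c) := by abel
      rw [h, norm_add_sq_real, real_inner_comm]
    calc (∫ ω, ‖g i ω - c‖ ^ 2 ∂μ)
        = ∫ ω, (‖g i ω - m i‖ ^ 2 + 2 * ⟪m i - c, g i ω - m i⟫ + ‖m i - c‖ ^ 2) ∂μ := by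
          exact integral_congr_ae (Filter.Eventually.of_forall hexp)
      _ = (∫ ω, 2 * ⟪m i - c, g i ω - m i⟫ ∂μ) + (∫ ω, ‖g i ω - m i‖ ^ 2 ∂μ)
            + ‖m i - c‖ ^ 2 := by
          have hIab : Integrable
              (fun ω => ‖g i ω - m i‖ ^ 2 + 2 * ⟪m i - c, g i ω - m i⟫) μ := hIa.add hIb
          rw [integral_add hIab (integrable_const _), integral_add hIa hIb, integral_const]
          simp [measure_univ]
          ring
      _ = (∫ ω, ‖g i ω - m i‖ ^ 2 ∂μ) + ‖m i - c‖ ^ 2 := by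
          have hz : (∫ ω, ⟪m i - c, g i ω - m i⟫ ∂μ) = 0 := by
            rw [integral_inner hgm]
            rw [integral_sub hgint (integrable_const _), integral_const, hmean i]
            simp [hm, measure_univ]
          rw [integral_const_mul, hz]
          ring
  -- the bias term bound
  have hbias : ∀ i : Fin n, ‖m i - c‖ ^ 2
      ≤ 2 * L ^ 2 * ‖x i - xbar‖ ^ 2 + 2 * ‖gradient (f i) xbar - c‖ ^ 2 := by
    intro i
    have h1 : m i - c = (m i - gradient (f i) xbar) + (gradient (f i) xbar - c) := by abel
    have h2 := norm_add_sq_le_two (m i - gradient (f i) xbar) (gradient (f i) xbar - c)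
    rw [← h1] at h2
    have h3 : ‖m i - gradient (f i) xbar‖ ≤ L * ‖x i - xbar‖ := hlip i (x i) xbar
    have h4 : (0:ℝ) ≤ ‖m i - gradient (f i) xbar‖ := norm_nonneg _
    have h5 : (0:ℝ) ≤ L * ‖x i - xbar‖ := by positivity
    nlinarith
  -- main chain
  have step1 : ∑ i, (∫ ω, ‖g i ω - (1 / (n : ℝ)) • ∑ k, g k ω‖ ^ 2 ∂μ)
      ≤ ∑ i, (∫ ω, ‖g i ω - c‖ ^ 2 ∂μ) := by
    rw [← integral_finset_sum _ (fun i _ => hInt1 i),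
      ← integral_finset_sum _ (fun i _ => hInt2 i)]
    refine integral_mono (integrable_finset_sum _ (fun i _ => hInt1 i))
      (integrable_finset_sum _ (fun i _ => hInt2 i)) ?_
    intro ω
    exact sum_sq_sub_mean_le hn (fun k => g k ω) c
  have step2 : ∑ i, (∫ ω, ‖g i ω - c‖ ^ 2 ∂μ)
      ≤ (n : ℝ) * σ ^ 2 + 2 * L ^ 2 * ∑ i, ‖x i - xbar‖ ^ 2
        + 2 * ∑ i, ‖gradient (f i) xbar - c‖ ^ 2 := by
    have : ∀ i : Fin n, (∫ ω, ‖g i ω - c‖ ^ 2 ∂μ)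
        ≤ σ ^ 2 + (2 * L ^ 2 * ‖x i - xbar‖ ^ 2 + 2 * ‖gradient (f i) xbar - c‖ ^ 2) := by
      intro i
      rw [hkey i]
      exact add_le_add (hvar i) (hbias i)
    calc ∑ i, (∫ ω, ‖g i ω - c‖ ^ 2 ∂μ)
        ≤ ∑ i : Fin n, (σ ^ 2 + (2 * L ^ 2 * ‖x i - xbar‖ ^ 2
            + 2 * ‖gradient (f i) xbar - c‖ ^ 2)) :=
          Finset.sum_le_sum (fun i _ => this i)
      _ = (n : ℝ) * σ ^ 2 + 2 * L ^ 2 * ∑ i, ‖x i - xbar‖ ^ 2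
            + 2 * ∑ i, ‖gradient (f i) xbar - c‖ ^ 2 := by
          rw [Finset.sum_add_distrib, Finset.sum_add_distrib, Finset.sum_const,
            Finset.card_univ, Fintype.card_fin, nsmul_eq_mul,
            ← Finset.mul_sum, ← Finset.mul_sum]
          ring
  have hζ' : ∑ i, ‖gradient (f i) xbar - c‖ ^ 2 ≤ (n : ℝ) * ζ ^ 2 := by
    have h2 := mul_le_mul_of_nonneg_left hζbound (by positivity : (0:ℝ) ≤ (n:ℝ))
    rwa [← mul_assoc, mul_one_div, div_self hn0, one_mul] at h2
  have hxs : (0:ℝ) ≤ ∑ i, ‖x i - xbar‖ ^ 2 :=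
    Finset.sum_nonneg (fun i _ => by positivity)
  have hLs : (0:ℝ) ≤ L ^ 2 := by positivity
  have hζs : (0:ℝ) ≤ ζ ^ 2 := by positivity
  have hns : (1:ℝ) ≤ (n:ℝ) := by exact_mod_cast hn
  nlinarith [step1, step2, hζ', mul_nonneg hLs hxs]
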